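/- Let K be a compact convex subset of a finite-dimensional real normed vector space, let μ be a Borel probability measure on K, and let b = ∫ x dμ(x) be its barycenter. If b is an extreme point of K, then μ is the Dirac (point) measure at b; equivalently, x = b for μ-almost every x. -/

import Mathlib

open MeasureTheory

/-- Let `K` be a compact convex subset of a finite-dimensional real normed
vector space, `μ` a Borel probability measure on `K`, and `b = ∫ x dμ(x)` its barycenter.
If `b` is an extreme point of `K`, then `μ` is the Dirac measure at `b`; equivalently,
`x = b` for `μ`-almost every `x`. -/
theorem extremePoint_barycenter_imp_dirac
    {E : Type*} [NormedAddCommGroup E] [NormedSpace ℝ E] [FiniteDimensional ℝ E]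
    [MeasurableSpace E] [BorelSpace E]
    (K : Set E) (hKcompact : IsCompact K) (hKconvex : Convex ℝ K)
    (μ : Measure E) [IsProbabilityMeasure μ] (hμK : μ Kᶜ = 0)
    (b : E) (hb : b = ∫ x, x ∂μ)
    (hext : b ∈ Set.extremePoints ℝ K) :
    μ = Measure.dirac b ∧ ∀ᵐ x ∂μ, x = b := by
  have hKclosed : IsClosed K := hKcompact.isClosed
  have haeK : ∀ᵐ x ∂μ, x ∈ K := by
    rw [MeasureTheory.ae_iff]
    exact hμK
  obtain ⟨C, hC⟩ : ∃ C, ∀ x ∈ K, ‖x‖ ≤ C := hKcompact.isBounded.exists_norm_le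
  have hint : Integrable (fun x => x) μ := by
    refine Integrable.mono' (integrable_const C) aestronglyMeasurable_id ?_
    filter_upwards [haeK] with x hx using hC x hx
  -- key: set integrals of id agree with those of the constant b
  have key : ∀ A : Set E, MeasurableSet A → ∫ x in A, x ∂μ = (μ A).toReal • b := by
    intro A hA
    rcases eq_or_ne (μ A) 0 with h0 | h0
    · rw [h0, Measure.restrict_eq_zero.2 h0]
      simp
    rcases eq_or_ne (μ Aᶜ) 0 with h1 | h1
    · have hA1 : μ A = 1 := (prob_compl_eq_zero_iff hA).1 h1
      have hc0 : ∫ x in Aᶜ, x ∂μ = 0 := by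
        rw [Measure.restrict_eq_zero.2 h1]; simp
      have : ∫ x in A, x ∂μ = ∫ x, x ∂μ := by
        rw [← integral_add_compl hA hint, hc0, add_zero]
      rw [this, hA1, ← hb]; simp
    · -- both A and Aᶜ have positive measure
      have hAlt : μ A < ⊤ := lt_of_le_of_lt (measure_mono (Set.subset_univ _)) (by simp)
      have hAclt : μ Aᶜ < ⊤ := lt_of_le_of_lt (measure_mono (Set.subset_univ _)) (by simp)
      set t : ℝ := (μ A).toReal with ht
      set s : ℝ := (μ Aᶜ).toReal with hs
      have htpos : 0 < t := ENNReal.toReal_pos h0 hAlt.ne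
      have hspos : 0 < s := ENNReal.toReal_pos h1 hAclt.ne
      have hts : t + s = 1 := by
        rw [ht, hs, ← ENNReal.toReal_add hAlt.ne hAclt.ne,
          measure_add_measure_compl hA]
        simp
      have hb1 : (⨍ x in A, x ∂μ) ∈ K :=
        hKconvex.set_average_mem hKclosed h0 hAlt.ne
          (ae_restrict_of_ae haeK) (hint.integrableOn)
      have hb2 : (⨍ x in Aᶜ, x ∂μ) ∈ K :=
        hKconvex.set_average_mem hKclosed h1 hAclt.ne
          (ae_restrict_of_ae haeK) (hint.integrableOn)
      have hsplit : b = t • (⨍ x in A, x ∂μ) + s • (⨍ x in Aᶜ, x ∂μ) := by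
        rw [setAverage_eq, setAverage_eq, smul_smul, smul_smul, measureReal_def, measureReal_def, ← ht, ← hs,
          mul_inv_cancel₀ htpos.ne', mul_inv_cancel₀ hspos.ne', one_smul, one_smul,
          hb, ← integral_add_compl hA hint]
      have hmem : b ∈ openSegment ℝ (⨍ x in A, x ∂μ) (⨍ x in Aᶜ, x ∂μ) :=
        ⟨t, s, htpos, hspos, hts, hsplit.symm⟩
      have := hext.2 hb1 hb2 hmem
      rw [setAverage_eq, measureReal_def, ← ht] at this
      calc ∫ x in A, x ∂μ = t • (t⁻¹ • ∫ x in A, x ∂μ) := by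
            rw [smul_smul, mul_inv_cancel₀ htpos.ne', one_smul]
        _ = t • b := by rw [this]
  have hae : ∀ᵐ x ∂μ, x = b := by
    have : (fun x => x) =ᵐ[μ] (fun _ => b) := by
      refine ae_eq_of_forall_setIntegral_eq_of_sigmaFinite
        (fun s hs _ => hint.integrableOn) (fun s hs _ => (integrable_const b).integrableOn) ?_
      intro A hA _
      rw [key A hA, setIntegral_const, measureReal_def]
    exact this
  refine ⟨?_, hae⟩
  have hbc : μ {b}ᶜ = 0 := by
    rw [MeasureTheory.ae_iff] at hae
    simpa [Set.compl_def] using hae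
  ext A hA
  rw [Measure.dirac_apply' b hA]
  by_cases hbA : b ∈ A
  · have h0 : μ Aᶜ = 0 := measure_mono_null
      (fun x hx (h : x = b) => hx (h ▸ hbA)) hbc
    rw [(prob_compl_eq_zero_iff hA).1 h0, Set.indicator_of_mem hbA, Pi.one_apply]
  · have h0 : μ A = 0 := measure_mono_null
      (fun x hx (h : x = b) => hbA (h ▸ hx)) hbc
    rw [h0, Set.indicator_of_notMem hbA]
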